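/- Let G be a group, A a G-graded ring, and B the smash product ring with idempotents {e_x}. For the rational pairing 𝒯 = (AG, B, ⟨-,-⟩), the trace ideal Rat^𝒯(B) equals ⊕_{x∈G} e_x Ã, and for every right B-module M one has Rat^𝒯(M) = M · Rat^𝒯(B) = ⊕_{x∈G} M e_x. -/

import Mathlib

set_option synthInstance.maxHeartbeats 1000000
open MulOpposite

variable {G : Type*} [Group G] [DecidableEq G] {A : Type*} [Ring A]


/-- Right action of `a ∈ A` on the basis element `y` of `𝒞 = AG ≅ G →₀ A`. -/
noncomputable def ractSingle (𝒜 : G → AddSubgroup A) [DirectSum.Decomposition 𝒜]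
    (y : G) (a : A) : G →₀ A :=
  DirectSum.toAddMonoid
    (fun z => (Finsupp.singleAddHom (y * z)).comp (𝒜 z).subtype)
    (DirectSum.decompose 𝒜 a)

/-- The left `A`-linear endomorphism `ã : c ↦ c·a` of `𝒞 = AG` (right
multiplication by `a`). -/
noncomputable def rmulHom (𝒜 : G → AddSubgroup A) [DirectSum.Decomposition 𝒜]
    (a : A) : (G →₀ A) →ₗ[A] (G →₀ A) :=
  Finsupp.lsum ℕ fun y => LinearMap.toSpanSingleton A _ (ractSingle 𝒜 y a)

/-- The projection `e_x` of `𝒞 = AG` onto the direct summand `Ax`. -/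
noncomputable def projHom (A : Type*) [Ring A] (x : G) : (G →₀ A) →ₗ[A] (G →₀ A) :=
  Finsupp.lsingle x ∘ₗ Finsupp.lapply x

/-- `ã` as an element of the opposite of the endomorphism ring of `𝒞` (the
left-colinear endomorphism ring has multiplication opposite to composition). -/
noncomputable def atilde (𝒜 : G → AddSubgroup A) [DirectSum.Decomposition 𝒜]
    (a : A) : (Module.End A (G →₀ A))ᵐᵒᵖ :=
  op (rmulHom 𝒜 a)

/-- `e_x` as an element of the opposite of the endomorphism ring of `𝒞`. -/
noncomputable def eIdem (A : Type*) [Ring A] (x : G) : (Module.End A (G →₀ A))ᵐᵒᵖ :=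
  op (projHom A x)

/-- The smash product ring `B`: the subring of the (left-colinear) endomorphism
ring of `𝒞 = AG` generated by `Ã` and the orthogonal idempotents `{e_x}`. -/
noncomputable def smashB (𝒜 : G → AddSubgroup A) [DirectSum.Decomposition 𝒜] :
    Subring (Module.End A (G →₀ A))ᵐᵒᵖ :=
  Subring.closure (Set.range (atilde 𝒜) ∪ Set.range (eIdem A (G := G)))

/-- The bilinear form `⟨-,-⟩ : 𝒞 × B → A`, `⟨c, f⟩ = ε(f(c))`. -/
noncomputable def cbPairing (c : G →₀ A) (b : (Module.End A (G →₀ A))ᵐᵒᵖ) : A :=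
  ((unop b) c).sum fun _ v => v

/-- `ã` as an element of the smash product ring `B = smashB 𝒜`. -/
noncomputable def atildeB (𝒜 : G → AddSubgroup A) [DirectSum.Decomposition 𝒜]
    (a : A) : smashB 𝒜 :=
  ⟨atilde 𝒜 a, Subring.subset_closure (Set.mem_union_left _ ⟨a, rfl⟩)⟩

/-- `e_x` as an element of the smash product ring `B = smashB 𝒜`. -/
noncomputable def eIdemB (𝒜 : G → AddSubgroup A) [DirectSum.Decomposition 𝒜]
    (x : G) : smashB 𝒜 :=
  ⟨eIdem A x, Subring.subset_closure (Set.mem_union_right _ ⟨x, rfl⟩)⟩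

/-- The set of rational elements of a right `B`-module `M`, for the rational
pairing `𝒯 = (AG, B, ⟨-,-⟩)`: `m` is rational if there are finitely many
`(c_i, m_i) ∈ 𝒞 × M` with `m·b = Σ_i m_i ⟨c_i, b⟩` for all `b ∈ B`. -/
noncomputable def ratSet (𝒜 : G → AddSubgroup A) [DirectSum.Decomposition 𝒜]
    (M : Type*) [AddCommGroup M] [Module (smashB 𝒜)ᵐᵒᵖ M] : Set M :=
  {m | ∃ (n : ℕ) (c : Fin n → (G →₀ A)) (v : Fin n → M), ∀ b : smashB 𝒜,
    op b • m = ∑ i, op (atildeB 𝒜 (cbPairing (c i) (b : (Module.End A (G →₀ A))ᵐᵒᵖ))) • v i}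

set_option linter.unusedSectionVars false
section Aux
variable (𝒜 : G → AddSubgroup A) [DirectSum.Decomposition 𝒜]

/-- sum-of-coefficients as an additive hom -/
noncomputable def epsHom : (G →₀ A) →+ A :=
  Finsupp.liftAddHom (fun _ : G => AddMonoidHom.id A)

lemma epsHom_apply (f : G →₀ A) : epsHom f = f.sum fun _ v => v := by
  simp [epsHom, Finsupp.liftAddHom_apply]; rfl

lemma epsHom_single (x : G) (a : A) : epsHom (Finsupp.single x a) = a := by
  simp [epsHom]

lemma cbPairing_def (c : G →₀ A) (b : (Module.End A (G →₀ A))ᵐᵒᵖ) :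
    cbPairing c b = epsHom ((unop b) c) := by
  rw [epsHom_apply]; rfl

/-- `ractSingle` as an additive hom in `a`. -/
noncomputable def ractHom (y : G) : A →+ (G →₀ A) :=
  (DirectSum.toAddMonoid
    (fun z => (Finsupp.singleAddHom (y * z)).comp (𝒜 z).subtype)).comp
    ((DirectSum.decomposeAddEquiv 𝒜).toAddMonoidHom)

lemma ractHom_apply (y : G) (a : A) : ractHom 𝒜 y a = ractSingle 𝒜 y a := rfl

lemma ractSingle_add (y : G) (a b : A) :
    ractSingle 𝒜 y (a + b) = ractSingle 𝒜 y a + ractSingle 𝒜 y b := by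
  rw [← ractHom_apply, ← ractHom_apply, ← ractHom_apply, map_add]

lemma ractSingle_zero (y : G) : ractSingle 𝒜 y 0 = 0 := by
  rw [← ractHom_apply, map_zero]

lemma ractSingle_of_mem {z : G} {a : A} (ha : a ∈ 𝒜 z) (y : G) :
    ractSingle 𝒜 y a = Finsupp.single (y * z) a := by
  unfold ractSingle
  have : a = ((⟨a, ha⟩ : 𝒜 z) : A) := rfl
  rw [this, DirectSum.decompose_coe, DirectSum.toAddMonoid_of]
  rfl

lemma ractSingle_one (hone : (1 : A) ∈ 𝒜 1) (y : G) :
    ractSingle 𝒜 y 1 = Finsupp.single y 1 := by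
  rw [ractSingle_of_mem 𝒜 hone, mul_one]

lemma eps_ractSingle (y : G) (a : A) : epsHom (ractSingle 𝒜 y a) = a := by
  induction a using DirectSum.Decomposition.inductionOn 𝒜 with
  | zero => rw [ractSingle_zero, map_zero]
  | homogeneous m =>
      rw [ractSingle_of_mem 𝒜 m.2, epsHom_single]
  | add m m' hm hm' => rw [ractSingle_add, map_add, hm, hm']

end Aux
section Aux2
set_option linter.unusedSectionVars false
variable (𝒜 : G → AddSubgroup A) [DirectSum.Decomposition 𝒜]

noncomputable local instance : ∀ (i : G) (x : 𝒜 i), Decidable (x ≠ 0) := fun _ _ => Classical.dec _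

lemma ractSingle_mul_mem
    (hmul : ∀ {x y : G} {a b : A}, a ∈ 𝒜 x → b ∈ 𝒜 y → a * b ∈ 𝒜 (x * y))
    {z : G} {h : A} (hh : h ∈ 𝒜 z) (y : G) (a : A) :
    ractSingle 𝒜 y (h * a) = h • ractSingle 𝒜 (y * z) a := by
  induction a using DirectSum.Decomposition.inductionOn 𝒜 with
  | zero => rw [mul_zero, ractSingle_zero, ractSingle_zero, smul_zero]
  | homogeneous m =>
      rw [ractSingle_of_mem 𝒜 (hmul hh m.2), ractSingle_of_mem 𝒜 m.2,
        Finsupp.smul_single, smul_eq_mul, mul_assoc]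
  | add m m' hm hm' =>
      rw [mul_add, ractSingle_add, ractSingle_add, hm, hm', smul_add]

lemma ractSingle_apply (y : G) (a : A) (k : G) :
    (ractSingle 𝒜 y a) k = (DirectSum.decompose 𝒜 a (y⁻¹ * k) : A) := by
  induction a using DirectSum.Decomposition.inductionOn 𝒜 with
  | zero => rw [ractSingle_zero, DirectSum.decompose_zero]; simp
  | homogeneous m =>
      rename_i i
      rw [ractSingle_of_mem 𝒜 m.2, DirectSum.decompose_coe, Finsupp.single_apply,
        DirectSum.of_apply]
      by_cases hik : i = y⁻¹ * k
      · subst hik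
        have : y * (y⁻¹ * k) = k := by group
        simp [this]
      · have : ¬ (y * i = k) := by
          intro hc; apply hik; rw [← hc]; group
        simp [hik, this]
  | add m m' hm hm' =>
      rw [ractSingle_add, DirectSum.decompose_add, Finsupp.add_apply, hm, hm']
      simp

lemma ractSingle_eq_sum (y : G) (a : A) :
    ractSingle 𝒜 y a = ∑ z ∈ (DirectSum.decompose 𝒜 a).support,
      Finsupp.single (y * z) (DirectSum.decompose 𝒜 a z : A) := by
  classical
  unfold ractSingle
  conv_lhs => rw [← DirectSum.sum_support_of (DirectSum.decompose 𝒜 a)]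
  rw [map_sum]
  refine Finset.sum_congr rfl fun z _ => ?_
  rw [DirectSum.toAddMonoid_of]
  rfl

lemma rmul_single (a : A) (y : G) (s : A) :
    rmulHom 𝒜 a (Finsupp.single y s) = s • ractSingle 𝒜 y a := by
  unfold rmulHom
  rw [Finsupp.lsum_single]
  rfl

lemma rmul_single_one (a : A) (y : G) :
    rmulHom 𝒜 a (Finsupp.single y 1) = ractSingle 𝒜 y a := by
  rw [rmul_single, one_smul]

lemma rmul_ractSingle
    (hmul : ∀ {x y : G} {a b : A}, a ∈ 𝒜 x → b ∈ 𝒜 y → a * b ∈ 𝒜 (x * y))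
    (a c : A) (y : G) :
    rmulHom 𝒜 a (ractSingle 𝒜 y c) = ractSingle 𝒜 y (c * a) := by
  induction c using DirectSum.Decomposition.inductionOn 𝒜 with
  | zero => rw [ractSingle_zero, map_zero, zero_mul, ractSingle_zero]
  | homogeneous m =>
      rw [ractSingle_of_mem 𝒜 m.2, rmul_single, ractSingle_mul_mem 𝒜 hmul m.2]
  | add m m' hm hm' =>
      rw [ractSingle_add, map_add, hm, hm', add_mul, ractSingle_add]

lemma proj_single (x y : G) (s : A) :
    projHom A x (Finsupp.single y s) =
      if y = x then Finsupp.single x s else 0 := by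
  unfold projHom
  simp only [LinearMap.coe_comp, Function.comp_apply, Finsupp.lapply_apply,
    Finsupp.lsingle_apply, Finsupp.single_apply]
  by_cases h : y = x <;> simp [h]

end Aux2
section Aux3
set_option linter.unusedSectionVars false
variable (𝒜 : G → AddSubgroup A) [DirectSum.Decomposition 𝒜]

noncomputable local instance : ∀ (i : G) (x : 𝒜 i), Decidable (x ≠ 0) :=
  fun _ _ => Classical.dec _

lemma ractSingle_neg (y : G) (a : A) :
    ractSingle 𝒜 y (-a) = - ractSingle 𝒜 y a := by
  rw [← ractHom_apply, map_neg, ractHom_apply]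

lemma endoext {φ ψ : (G →₀ A) →ₗ[A] (G →₀ A)}
    (h : ∀ y, φ (Finsupp.single y 1) = ψ (Finsupp.single y 1)) : φ = ψ :=
  Finsupp.lhom_ext' fun y => LinearMap.ext_ring (by simpa using h y)

lemma smashB_ext {b1 b2 : smashB 𝒜}
    (h : unop (b1 : (Module.End A (G →₀ A))ᵐᵒᵖ) =
         unop (b2 : (Module.End A (G →₀ A))ᵐᵒᵖ)) : b1 = b2 :=
  Subtype.ext (unop_injective h)

lemma atildeB_coe (a : A) :
    ((atildeB 𝒜 a : smashB 𝒜) : (Module.End A (G →₀ A))ᵐᵒᵖ) = op (rmulHom 𝒜 a) := rfl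

lemma eIdemB_coe (x : G) :
    ((eIdemB 𝒜 x : smashB 𝒜) : (Module.End A (G →₀ A))ᵐᵒᵖ) = op (projHom A x) := rfl

lemma atildeB_add (a b : A) :
    atildeB 𝒜 (a + b) = atildeB 𝒜 a + atildeB 𝒜 b := by
  apply smashB_ext
  push_cast [atildeB_coe]
  rw [← op_add, unop_op, unop_op]
  refine endoext fun y => ?_
  rw [LinearMap.add_apply, rmul_single_one, rmul_single_one, rmul_single_one,
    ractSingle_add]

lemma atildeB_zero : atildeB 𝒜 0 = 0 := by
  apply smashB_ext
  rw [atildeB_coe]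
  have : ((0 : smashB 𝒜) : (Module.End A (G →₀ A))ᵐᵒᵖ) = 0 := rfl
  rw [this]
  rw [show (0 : (Module.End A (G →₀ A))ᵐᵒᵖ) = op 0 from rfl, unop_op, unop_op]
  refine endoext fun y => ?_
  rw [rmul_single_one, ractSingle_zero, LinearMap.zero_apply]

lemma atildeB_neg (a : A) : atildeB 𝒜 (-a) = - atildeB 𝒜 a := by
  have := atildeB_add 𝒜 a (-a)
  rw [add_neg_cancel, atildeB_zero] at this
  exact eq_neg_of_add_eq_zero_right this.symm

lemma atildeB_one (hone : (1 : A) ∈ 𝒜 1) : atildeB 𝒜 1 = 1 := by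
  apply smashB_ext
  rw [atildeB_coe]
  have : ((1 : smashB 𝒜) : (Module.End A (G →₀ A))ᵐᵒᵖ) = op 1 := rfl
  rw [this, unop_op, unop_op]
  refine endoext fun y => ?_
  rw [rmul_single_one, ractSingle_one 𝒜 hone, Module.End.one_apply]

lemma atildeB_mul
    (hmul : ∀ {x y : G} {a b : A}, a ∈ 𝒜 x → b ∈ 𝒜 y → a * b ∈ 𝒜 (x * y))
    (c a : A) : atildeB 𝒜 c * atildeB 𝒜 a = atildeB 𝒜 (c * a) := by
  apply smashB_ext
  push_cast [atildeB_coe]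
  rw [← op_mul, unop_op, unop_op]
  refine endoext fun y => ?_
  rw [Module.End.mul_apply, rmul_single_one, rmul_single_one,
    rmul_ractSingle 𝒜 hmul]

lemma eIdemB_mul_eIdemB (y x : G) :
    eIdemB 𝒜 y * eIdemB 𝒜 x = if y = x then eIdemB 𝒜 x else 0 := by
  apply smashB_ext
  push_cast [eIdemB_coe]
  rw [apply_ite (fun b : smashB 𝒜 => (b : (Module.End A (G →₀ A))ᵐᵒᵖ))]
  rw [eIdemB_coe]
  have h0 : ((0 : smashB 𝒜) : (Module.End A (G →₀ A))ᵐᵒᵖ) = op 0 := rfl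
  rw [h0, ← op_mul, apply_ite unop, unop_op, unop_op, unop_op]
  refine endoext fun w => ?_
  rw [Module.End.mul_apply]
  split_ifs with hyx
  · subst hyx
    by_cases hwy : w = y <;> simp [proj_single, hwy]
  · by_cases hwy : w = y
    · subst hwy
      simp [proj_single, hyx]
    · simp [proj_single, hwy]

end Aux3
section Aux4
set_option linter.unusedSectionVars false
variable (𝒜 : G → AddSubgroup A) [DirectSum.Decomposition 𝒜]

noncomputable local instance : ∀ (i : G) (x : 𝒜 i), Decidable (x ≠ 0) :=
  fun _ _ => Classical.dec _

lemma masterExists (hone : (1 : A) ∈ 𝒜 1)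
    (hmul : ∀ {x y : G} {a b : A}, a ∈ 𝒜 x → b ∈ 𝒜 y → a * b ∈ 𝒜 (x * y))
    (β : (Module.End A (G →₀ A))ᵐᵒᵖ) (hβ : β ∈ smashB 𝒜) (x : G) :
    ∃ a : A, (unop β) (Finsupp.single x 1) = ractSingle 𝒜 x a := by
  revert x
  induction hβ using Subring.closure_induction with
  | mem β hβ =>
      intro x
      rcases hβ with ⟨a, rfl⟩ | ⟨x0, rfl⟩
      · exact ⟨a, by rw [atilde, unop_op, rmul_single_one]⟩
      · rw [eIdem, unop_op]
        by_cases hx : x = x0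
        · subst hx
          exact ⟨1, by rw [proj_single, if_pos rfl, ractSingle_one 𝒜 hone]⟩
        · exact ⟨0, by rw [proj_single, if_neg hx, ractSingle_zero]⟩
  | zero =>
      intro x
      exact ⟨0, by rw [unop_zero, LinearMap.zero_apply, ractSingle_zero]⟩
  | one =>
      intro x
      exact ⟨1, by rw [unop_one, Module.End.one_apply, ractSingle_one 𝒜 hone]⟩
  | add β1 β2 h1 h2 ih1 ih2 =>
      intro x
      obtain ⟨a1, ha1⟩ := ih1 x
      obtain ⟨a2, ha2⟩ := ih2 x
      exact ⟨a1 + a2, by rw [unop_add, LinearMap.add_apply, ha1, ha2, ractSingle_add]⟩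
  | neg β hb ih =>
      intro x
      obtain ⟨a, ha⟩ := ih x
      exact ⟨-a, by rw [unop_neg, LinearMap.neg_apply, ha, ractSingle_neg]⟩
  | mul β1 β2 h1 h2 ih1 ih2 =>
      intro x
      obtain ⟨a1, ha1⟩ := ih1 x
      rw [unop_mul, Module.End.mul_apply, ha1]
      clear ha1
      -- show: ∃ a, unop β2 (ractSingle 𝒜 x a1) = ractSingle 𝒜 x a
      induction a1 using DirectSum.Decomposition.inductionOn 𝒜 with
      | zero => exact ⟨0, by simp [ractSingle_zero]⟩
      | homogeneous m =>
          rename_i i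
          obtain ⟨a2, ha2⟩ := ih2 (x * i)
          refine ⟨(m : A) * a2, ?_⟩
          rw [ractSingle_of_mem 𝒜 m.2]
          have hsm : (Finsupp.single (x * i) (m : A)) =
              (m : A) • (Finsupp.single (x * i) (1 : A)) := by
            rw [Finsupp.smul_single, smul_eq_mul, mul_one]
          rw [hsm, map_smul, ha2, ractSingle_mul_mem 𝒜 hmul m.2]
      | add m m' hm hm' =>
          obtain ⟨w, hw⟩ := hm
          obtain ⟨w', hw'⟩ := hm'
          exact ⟨w + w', by rw [ractSingle_add, map_add, hw, hw', ractSingle_add]⟩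

lemma masterEq (hone : (1 : A) ∈ 𝒜 1)
    (hmul : ∀ {x y : G} {a b : A}, a ∈ 𝒜 x → b ∈ 𝒜 y → a * b ∈ 𝒜 (x * y))
    (b : smashB 𝒜) (x : G) :
    (unop (b : (Module.End A (G →₀ A))ᵐᵒᵖ)) (Finsupp.single x 1) =
      ractSingle 𝒜 x (cbPairing (Finsupp.single x 1) ↑b) := by
  obtain ⟨a, ha⟩ := masterExists 𝒜 hone hmul ↑b b.2 x
  rw [ha, cbPairing_def, ha, eps_ractSingle]

/-- The key ring identity `e_x · b = e_x · ã_{⟨x, b⟩}`. -/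
lemma exb_eq (hone : (1 : A) ∈ 𝒜 1)
    (hmul : ∀ {x y : G} {a b : A}, a ∈ 𝒜 x → b ∈ 𝒜 y → a * b ∈ 𝒜 (x * y))
    (b : smashB 𝒜) (x : G) :
    eIdemB 𝒜 x * b =
      eIdemB 𝒜 x * atildeB 𝒜 (cbPairing (Finsupp.single x 1) ↑b) := by
  apply smashB_ext
  push_cast [eIdemB_coe, atildeB_coe]
  obtain ⟨β, hβ⟩ : ∃ β, (b : (Module.End A (G →₀ A))ᵐᵒᵖ) = op β := ⟨_, (op_unop _).symm⟩
  rw [hβ, ← op_mul, ← op_mul, unop_op, unop_op]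
  refine endoext fun y => ?_
  have hm := masterEq 𝒜 hone hmul b x
  rw [hβ, unop_op] at hm
  rw [Module.End.mul_apply, Module.End.mul_apply, proj_single]
  by_cases hyx : y = x
  · subst hyx
    rw [if_pos rfl, hm, rmul_single_one]
  · rw [if_neg hyx, map_zero, map_zero]

end Aux4
section Aux5
set_option linter.unusedSectionVars false
variable (𝒜 : G → AddSubgroup A) [DirectSum.Decomposition 𝒜]
variable (M : Type*) [AddCommGroup M] [Module (smashB 𝒜)ᵐᵒᵖ M]

noncomputable local instance : ∀ (i : G) (x : 𝒜 i), Decidable (x ≠ 0) :=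
  fun _ _ => Classical.dec _
noncomputable local instance : Ring (smashB 𝒜) := SubringClass.toRing (smashB 𝒜)

lemma key1 (hone : (1 : A) ∈ 𝒜 1)
    (hmul : ∀ {x y : G} {a b : A}, a ∈ 𝒜 x → b ∈ 𝒜 y → a * b ∈ 𝒜 (x * y))
    (b : smashB 𝒜) (x : G) (m : M) :
    op b • (op (eIdemB 𝒜 x) • m) =
      op (atildeB 𝒜 (cbPairing (Finsupp.single x 1) ↑b)) • (op (eIdemB 𝒜 x) • m) := by
  rw [smul_smul, smul_smul, ← op_mul, ← op_mul, ← exb_eq 𝒜 hone hmul b x,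
    exb_eq 𝒜 hone hmul b x]

lemma key2 (x y : G) (m : M) :
    op (eIdemB 𝒜 x) • (op (eIdemB 𝒜 y) • m) =
      if y = x then op (eIdemB 𝒜 y) • m else 0 := by
  rw [smul_smul, ← op_mul, eIdemB_mul_eIdemB]
  split_ifs with h
  · subst h; rfl
  · rw [op_zero, zero_smul]

lemma rat_zero : (0 : M) ∈ ratSet 𝒜 M :=
  ⟨0, Fin.elim0, Fin.elim0, fun b => by simp⟩

lemma rat_add {m1 m2 : M} (h1 : m1 ∈ ratSet 𝒜 M) (h2 : m2 ∈ ratSet 𝒜 M) :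
    m1 + m2 ∈ ratSet 𝒜 M := by
  obtain ⟨n1, c1, v1, hh1⟩ := h1
  obtain ⟨n2, c2, v2, hh2⟩ := h2
  refine ⟨n1 + n2, Fin.append c1 c2, Fin.append v1 v2, fun b => ?_⟩
  rw [smul_add, hh1 b, hh2 b, Fin.sum_univ_add]
  simp [Fin.append_left, Fin.append_right]

/-- `ratSet` as an `AddSubmonoid`. -/
noncomputable def ratSub : AddSubmonoid M where
  carrier := ratSet 𝒜 M
  zero_mem' := rat_zero 𝒜 M
  add_mem' := rat_add 𝒜 M

lemma rat_of_finset {ι : Type*} (m : M) (s : Finset ι) (c : ι → (G →₀ A)) (v : ι → M)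
    (h : ∀ b : smashB 𝒜, op b • m =
      ∑ i ∈ s, op (atildeB 𝒜 (cbPairing (c i) (b : (Module.End A (G →₀ A))ᵐᵒᵖ))) • v i) :
    m ∈ ratSet 𝒜 M := by
  classical
  refine ⟨s.card, fun j => c (s.equivFin.symm j : ι), fun j => v (s.equivFin.symm j : ι),
    fun b => ?_⟩
  rw [h b, ← Finset.sum_coe_sort s, ← Equiv.sum_comp s.equivFin.symm]

lemma sum_op_atilde_smul {ι : Type*} (s : Finset ι) (u : ι → A) (v : M) :
    ∑ i ∈ s, op (atildeB 𝒜 (u i)) • v = op (atildeB 𝒜 (∑ i ∈ s, u i)) • v := by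
  let F : A →+ M :=
    { toFun := fun a => op (atildeB 𝒜 a) • v
      map_zero' := by rw [atildeB_zero, op_zero, zero_smul]
      map_add' := fun a b => by rw [atildeB_add, op_add, add_smul] }
  exact (map_sum F u s).symm

end Aux5
section Aux6
set_option linter.unusedSectionVars false
variable (𝒜 : G → AddSubgroup A) [DirectSum.Decomposition 𝒜]
variable (M : Type*) [AddCommGroup M] [Module (smashB 𝒜)ᵐᵒᵖ M]

noncomputable local instance : ∀ (i : G) (x : 𝒜 i), Decidable (x ≠ 0) :=
  fun _ _ => Classical.dec _
noncomputable local instance : Ring (smashB 𝒜) := SubringClass.toRing (smashB 𝒜)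

lemma proj_apply (x : G) (c : G →₀ A) :
    projHom A x c = Finsupp.single x (c x) := rfl

lemma cb_eIdem (c : G →₀ A) (x : G) :
    cbPairing c (eIdem A x) = c x := by
  rw [cbPairing_def, eIdem, unop_op, proj_apply, epsHom_single]

lemma cb_one (c : G →₀ A) :
    cbPairing c (1 : (Module.End A (G →₀ A))ᵐᵒᵖ) = epsHom c := by
  rw [cbPairing_def, unop_one, Module.End.one_apply]

lemma rat_struct {m : M} (hm : m ∈ ratSet 𝒜 M) :
    ∃ S : Finset G, (∀ x ∉ S, op (eIdemB 𝒜 x) • m = 0) ∧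
      (∑ x ∈ S, op (eIdemB 𝒜 x) • m = m) := by
  classical
  obtain ⟨n, c, v, h⟩ := hm
  refine ⟨Finset.univ.biUnion fun i => (c i).support, fun x hx => ?_, ?_⟩
  · rw [h (eIdemB 𝒜 x)]
    refine Finset.sum_eq_zero fun i _ => ?_
    have hcx : (c i) x = 0 := by
      rw [← Finsupp.notMem_support_iff]
      exact fun hmem => hx (Finset.mem_biUnion.mpr ⟨i, Finset.mem_univ i, hmem⟩)
    rw [eIdemB_coe, ← eIdem, cb_eIdem, hcx, atildeB_zero, op_zero, zero_smul]
  · have hterm : ∀ x ∈ Finset.univ.biUnion (fun i => (c i).support),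
        op (eIdemB 𝒜 x) • m =
          ∑ i : Fin n, op (atildeB 𝒜 ((c i) x)) • v i := by
      intro x _
      rw [h (eIdemB 𝒜 x)]
      refine Finset.sum_congr rfl fun i _ => ?_
      rw [eIdemB_coe, ← eIdem, cb_eIdem]
    rw [Finset.sum_congr rfl hterm, Finset.sum_comm]
    have hone' := h 1
    rw [op_one, one_smul] at hone'
    rw [hone']
    refine Finset.sum_congr rfl fun i _ => ?_
    rw [sum_op_atilde_smul]
    congr 1
    have hsub : (c i).support ⊆ Finset.univ.biUnion fun j => (c j).support :=
      fun x hx => Finset.mem_biUnion.mpr ⟨i, Finset.mem_univ i, hx⟩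
    have : ∑ x ∈ Finset.univ.biUnion (fun j => (c j).support), (c i) x =
        ∑ x ∈ (c i).support, (c i) x :=
      (Finset.sum_subset hsub fun x _ hnx => Finsupp.notMem_support_iff.mp hnx).symm
    rw [this]
    have hcb : cbPairing (c i) ((1 : smashB 𝒜) : (Module.End A (G →₀ A))ᵐᵒᵖ) =
        epsHom (c i) := by
      rw [OneMemClass.coe_one, cb_one]
    rw [hcb, epsHom_apply]
    rfl

lemma claim2_sub {m : M} (hm : m ∈ ratSet 𝒜 M) :
    ∃ g : G →₀ M, m = g.sum fun x mx => op (eIdemB 𝒜 x) • mx := by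
  classical
  obtain ⟨S, hoff, hsum⟩ := rat_struct 𝒜 M hm
  have hf : ∀ a : G, (fun y => op (eIdemB 𝒜 y) • m) a ≠ 0 → a ∈ S :=
    fun x hx => by by_contra hxS; exact hx (hoff x hxS)
  have key : ∀ x ∈ S,
      op (eIdemB 𝒜 x) • ((Finsupp.onFinset S (fun y => op (eIdemB 𝒜 y) • m) hf) x) =
        op (eIdemB 𝒜 x) • m :=
    fun x _ => by rw [Finsupp.onFinset_apply, key2, if_pos rfl]
  refine ⟨Finsupp.onFinset S (fun y => op (eIdemB 𝒜 y) • m) hf, ?_⟩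
  rw [Finsupp.sum_of_support_subset _ Finsupp.support_onFinset_subset _
    (fun i _ => smul_zero _), Finset.sum_congr rfl key, hsum]

lemma claim2_sup {m : M} (g : G →₀ M)
    (hone : (1 : A) ∈ 𝒜 1)
    (hmul : ∀ {x y : G} {a b : A}, a ∈ 𝒜 x → b ∈ 𝒜 y → a * b ∈ 𝒜 (x * y))
    (hg : m = g.sum fun x mx => op (eIdemB 𝒜 x) • mx) :
    m ∈ ratSet 𝒜 M := by
  classical
  refine rat_of_finset 𝒜 M m g.support (fun x => Finsupp.single x 1)
    (fun x => op (eIdemB 𝒜 x) • g x) (fun b => ?_)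
  rw [hg, Finsupp.sum, Finset.smul_sum]
  exact Finset.sum_congr rfl fun x _ => key1 𝒜 M hone hmul b x (g x)

lemma claim3 (g : G →₀ M)
    (hz : (g.sum fun x mx => op (eIdemB 𝒜 x) • mx) = 0) (x : G) :
    op (eIdemB 𝒜 x) • g x = 0 := by
  classical
  have := congrArg (fun m : M => op (eIdemB 𝒜 x) • m) hz
  simp only [smul_zero] at this
  rw [Finsupp.sum, Finset.smul_sum] at this
  have hterm : ∀ y ∈ g.support,
      op (eIdemB 𝒜 x) • (op (eIdemB 𝒜 y) • g y) =
        if y = x then op (eIdemB 𝒜 y) • g y else 0 := fun y _ => key2 𝒜 M x y (g y)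
  rw [Finset.sum_congr rfl hterm, Finset.sum_ite_eq' g.support x
    (fun y => op (eIdemB 𝒜 y) • g y)] at this
  by_cases hx : x ∈ g.support
  · rwa [if_pos hx] at this
  · rw [Finsupp.notMem_support_iff.mp hx, smul_zero]

end Aux6
section Aux7
set_option linter.unusedSectionVars false
variable (𝒜 : G → AddSubgroup A) [DirectSum.Decomposition 𝒜]

noncomputable local instance : ∀ (i : G) (x : 𝒜 i), Decidable (x ≠ 0) :=
  fun _ _ => Classical.dec _
noncomputable local instance : Ring (smashB 𝒜) := SubringClass.toRing (smashB 𝒜)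

/-- `⊕_x e_x Ã` as an additive hom. -/
noncomputable def TPhi : (G →₀ A) →+ smashB 𝒜 :=
  Finsupp.liftAddHom (fun x => AddMonoidHom.mk'
    (fun a => eIdemB 𝒜 x * atildeB 𝒜 a)
    (fun a b => by rw [atildeB_add, mul_add]))

lemma TPhi_apply (f : G →₀ A) :
    TPhi 𝒜 f = f.sum fun x ax => eIdemB 𝒜 x * atildeB 𝒜 ax := by
  rw [TPhi, Finsupp.liftAddHom_apply]
  rfl

/-- `⊕_x e_x Ã` as an `AddSubgroup` of `B`. -/
noncomputable def TSub (hone : (1 : A) ∈ 𝒜 1) : AddSubgroup (smashB 𝒜) where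
  carrier := {b : smashB 𝒜 | ∃ f : G →₀ A,
    b = f.sum fun x ax => eIdemB 𝒜 x * atildeB 𝒜 ax}
  zero_mem' := ⟨0, by rw [← TPhi_apply, map_zero]⟩
  add_mem' := by
    rintro b1 b2 ⟨f1, rfl⟩ ⟨f2, rfl⟩
    exact ⟨f1 + f2, by rw [← TPhi_apply, ← TPhi_apply, ← TPhi_apply, map_add]⟩
  neg_mem' := by
    rintro b ⟨f, rfl⟩
    exact ⟨-f, by rw [← TPhi_apply, ← TPhi_apply, map_neg]⟩

lemma T_single (hone : (1 : A) ∈ 𝒜 1) (y : G) (a : A) :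
    eIdemB 𝒜 y * atildeB 𝒜 a ∈ TSub 𝒜 hone := by
  have h0 : eIdemB 𝒜 y * atildeB 𝒜 (0 : A) = 0 := by rw [atildeB_zero, mul_zero]
  refine ⟨Finsupp.single y a, ?_⟩
  rw [Finsupp.sum_single_index (h := fun x ax => eIdemB 𝒜 x * atildeB 𝒜 ax) h0]

lemma T_e (hone : (1 : A) ∈ 𝒜 1) (x : G) : eIdemB 𝒜 x ∈ TSub 𝒜 hone := by
  have : eIdemB 𝒜 x = eIdemB 𝒜 x * atildeB 𝒜 1 := by
    rw [atildeB_one 𝒜 hone, mul_one]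
  rw [this]
  exact T_single 𝒜 hone x 1

lemma T_mul_atilde (hone : (1 : A) ∈ 𝒜 1)
    (hmul : ∀ {x y : G} {a b : A}, a ∈ 𝒜 x → b ∈ 𝒜 y → a * b ∈ 𝒜 (x * y))
    {b : smashB 𝒜} (hb : b ∈ TSub 𝒜 hone) (c : A) :
    b * atildeB 𝒜 c ∈ TSub 𝒜 hone := by
  obtain ⟨f, rfl⟩ := hb
  rw [Finsupp.sum, Finset.sum_mul]
  refine AddSubgroup.sum_mem _ fun x _ => ?_
  rw [mul_assoc, atildeB_mul 𝒜 hmul]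
  exact T_single 𝒜 hone x _

lemma atilde_mul_eIdem (a : A) (x : G) :
    atildeB 𝒜 a * eIdemB 𝒜 x =
      ∑ z ∈ (DirectSum.decompose 𝒜 a).support,
        eIdemB 𝒜 (x * z⁻¹) * atildeB 𝒜 (DirectSum.decompose 𝒜 a z : A) := by
  apply smashB_ext
  have hcoe : ((∑ z ∈ (DirectSum.decompose 𝒜 a).support,
      eIdemB 𝒜 (x * z⁻¹) * atildeB 𝒜 (DirectSum.decompose 𝒜 a z : A) : smashB 𝒜) :
        (Module.End A (G →₀ A))ᵐᵒᵖ) =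
      ∑ z ∈ (DirectSum.decompose 𝒜 a).support,
        ((eIdemB 𝒜 (x * z⁻¹) * atildeB 𝒜 (DirectSum.decompose 𝒜 a z : A) : smashB 𝒜) :
          (Module.End A (G →₀ A))ᵐᵒᵖ) := by
    push_cast
    rfl
  rw [hcoe]
  rw [Finset.unop_sum]
  push_cast [atildeB_coe, eIdemB_coe]
  rw [← op_mul, unop_op]
  refine endoext fun y => ?_
  rw [LinearMap.sum_apply, Module.End.mul_apply, rmul_single_one, proj_apply,
    ractSingle_apply]
  have hterm : ∀ z ∈ (DirectSum.decompose 𝒜 a).support,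
      (unop (op (projHom A (x * z⁻¹)) * op (rmulHom 𝒜 (DirectSum.decompose 𝒜 a z : A))))
        (Finsupp.single y 1) =
      if z = y⁻¹ * x then ractSingle 𝒜 y (DirectSum.decompose 𝒜 a z : A) else 0 := by
    intro z _
    rw [← op_mul, unop_op, Module.End.mul_apply, proj_single]
    have hiff : (y = x * z⁻¹) ↔ (z = y⁻¹ * x) := by
      constructor
      · intro h; rw [h]; group
      · intro h; rw [h]; group
    by_cases h : z = y⁻¹ * x
    · rw [if_pos (hiff.mpr h), if_pos h]
      have : x * z⁻¹ = y := by rw [h]; group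
      rw [this, rmul_single_one]
    · rw [if_neg (fun hy => h (hiff.mp hy)), if_neg h, map_zero]
  rw [Finset.sum_congr rfl hterm, Finset.sum_ite_eq' (DirectSum.decompose 𝒜 a).support
    (y⁻¹ * x) (fun z => ractSingle 𝒜 y (DirectSum.decompose 𝒜 a z : A))]
  by_cases hs : y⁻¹ * x ∈ (DirectSum.decompose 𝒜 a).support
  · rw [if_pos hs, ractSingle_of_mem 𝒜 (DirectSum.decompose 𝒜 a (y⁻¹ * x)).2]
    have : y * (y⁻¹ * x) = x := by group
    rw [this]
  · rw [if_neg hs]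
    have : (DirectSum.decompose 𝒜 a) (y⁻¹ * x) = 0 := by
      rwa [← DFinsupp.notMem_support_iff]
    rw [this]
    simp

set_option maxHeartbeats 1000000 in
lemma bmulproj_mem (hone : (1 : A) ∈ 𝒜 1)
    (hmul : ∀ {x y : G} {a b : A}, a ∈ 𝒜 x → b ∈ 𝒜 y → a * b ∈ 𝒜 (x * y))
    (β : (Module.End A (G →₀ A))ᵐᵒᵖ) (hβ : β ∈ smashB 𝒜) :
    ∀ x : G, (⟨β, hβ⟩ : smashB 𝒜) * eIdemB 𝒜 x ∈ TSub 𝒜 hone := by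
  induction hβ using Subring.closure_induction with
  | mem β hβ0 =>
      intro x
      rcases hβ0 with ⟨a, rfl⟩ | ⟨y, rfl⟩
      · have : (⟨atilde 𝒜 a, _⟩ : smashB 𝒜) = atildeB 𝒜 a := rfl
        rw [this, atilde_mul_eIdem]
        exact AddSubgroup.sum_mem _ fun z _ => T_single 𝒜 hone _ _
      · have : (⟨eIdem A y, _⟩ : smashB 𝒜) = eIdemB 𝒜 y := rfl
        rw [this, eIdemB_mul_eIdemB]
        split_ifs
        · exact T_e 𝒜 hone x
        · exact zero_mem _
  | zero =>
      intro x
      have : (⟨0, _⟩ : smashB 𝒜) = 0 := rfl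
      rw [this, zero_mul]
      exact zero_mem _
  | one =>
      intro x
      have : (⟨1, _⟩ : smashB 𝒜) = 1 := rfl
      rw [this, one_mul]
      exact T_e 𝒜 hone x
  | add β1 β2 h1 h2 ih1 ih2 =>
      intro x
      have : (⟨β1 + β2, _⟩ : smashB 𝒜) = ⟨β1, h1⟩ + ⟨β2, h2⟩ := rfl
      rw [this, add_mul]
      exact add_mem (ih1 x) (ih2 x)
  | neg β hb ih =>
      intro x
      have : (⟨-β, _⟩ : smashB 𝒜) = -⟨β, hb⟩ := rfl
      rw [this, neg_mul]
      exact neg_mem (ih x)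
  | mul β1 β2 h1 h2 ih1 ih2 =>
      intro x
      have h12 : (⟨β1 * β2, _⟩ : smashB 𝒜) = ⟨β1, h1⟩ * ⟨β2, h2⟩ := rfl
      rw [h12, mul_assoc]
      obtain ⟨f, hf⟩ := ih2 x
      rw [hf, Finsupp.sum, Finset.mul_sum]
      refine AddSubgroup.sum_mem _ fun y _ => ?_
      rw [← mul_assoc]
      exact T_mul_atilde 𝒜 hone hmul (ih1 y) _

end Aux7
section Aux8
set_option linter.unusedSectionVars false
variable (𝒜 : G → AddSubgroup A) [DirectSum.Decomposition 𝒜]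

noncomputable local instance : ∀ (i : G) (x : 𝒜 i), Decidable (x ≠ 0) :=
  fun _ _ => Classical.dec _
noncomputable local instance : Ring (smashB 𝒜) := SubringClass.toRing (smashB 𝒜)

lemma ex_atilde_rat (hone : (1 : A) ∈ 𝒜 1)
    (hmul : ∀ {x y : G} {a b : A}, a ∈ 𝒜 x → b ∈ 𝒜 y → a * b ∈ 𝒜 (x * y))
    (x : G) (a : A) :
    eIdemB 𝒜 x * atildeB 𝒜 a ∈ ratSet 𝒜 (smashB 𝒜) := by
  refine rat_of_finset 𝒜 (smashB 𝒜) _ (DirectSum.decompose 𝒜 a).support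
    (fun z => Finsupp.single (x * z) (DirectSum.decompose 𝒜 a z : A))
    (fun z => eIdemB 𝒜 x) (fun b => ?_)
  rw [MulOpposite.smul_eq_mul_unop, unop_op, mul_assoc,
    exb_eq 𝒜 hone hmul (atildeB 𝒜 a * b) x]
  have hw : cbPairing (Finsupp.single x 1)
      ((atildeB 𝒜 a * b : smashB 𝒜) : (Module.End A (G →₀ A))ᵐᵒᵖ) =
      ∑ z ∈ (DirectSum.decompose 𝒜 a).support,
        cbPairing (Finsupp.single (x * z) (DirectSum.decompose 𝒜 a z : A))
          (b : (Module.End A (G →₀ A))ᵐᵒᵖ) := by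
    rw [cbPairing_def]
    have hcm : ((atildeB 𝒜 a * b : smashB 𝒜) : (Module.End A (G →₀ A))ᵐᵒᵖ) =
        atilde 𝒜 a * (b : (Module.End A (G →₀ A))ᵐᵒᵖ) := rfl
    rw [hcm, unop_mul, atilde, unop_op, Module.End.mul_apply, rmul_single_one,
      ractSingle_eq_sum, map_sum, map_sum]
    exact Finset.sum_congr rfl fun z _ => (cbPairing_def _ _).symm
  rw [hw]
  have hmap := map_sum (AddMonoidHom.mk' (fun c : A => eIdemB 𝒜 x * atildeB 𝒜 c)
      (fun u v => by rw [atildeB_add, mul_add]))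
    (fun z => cbPairing (Finsupp.single (x * z) (DirectSum.decompose 𝒜 a z : A))
      (b : (Module.End A (G →₀ A))ᵐᵒᵖ))
    (DirectSum.decompose 𝒜 a).support
  simp only [AddMonoidHom.mk'_apply] at hmap
  rw [hmap]
  exact Finset.sum_congr rfl fun z _ => by
    rw [MulOpposite.smul_eq_mul_unop, unop_op]

lemma claim1_sub (hone : (1 : A) ∈ 𝒜 1)
    (hmul : ∀ {x y : G} {a b : A}, a ∈ 𝒜 x → b ∈ 𝒜 y → a * b ∈ 𝒜 (x * y))
    {b : smashB 𝒜} (hb : b ∈ ratSet 𝒜 (smashB 𝒜)) :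
    ∃ f : G →₀ A, b = f.sum fun x ax => eIdemB 𝒜 x * atildeB 𝒜 ax := by
  obtain ⟨S, hoff, hsum⟩ := rat_struct 𝒜 (smashB 𝒜) hb
  have h1 : ∀ x ∈ S, op (eIdemB 𝒜 x) • b = b * eIdemB 𝒜 x :=
    fun x _ => by rw [MulOpposite.smul_eq_mul_unop, unop_op]
  have hbeq : b = ∑ x ∈ S, b * eIdemB 𝒜 x := by
    conv_lhs => rw [← hsum]
    exact Finset.sum_congr rfl h1
  have hmem : b ∈ TSub 𝒜 hone := by
    rw [hbeq]
    exact AddSubgroup.sum_mem _ fun x _ =>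
      bmulproj_mem 𝒜 hone hmul ↑b b.2 x
  exact hmem

lemma claim1_sup (hone : (1 : A) ∈ 𝒜 1)
    (hmul : ∀ {x y : G} {a b : A}, a ∈ 𝒜 x → b ∈ 𝒜 y → a * b ∈ 𝒜 (x * y))
    (f : G →₀ A) :
    (f.sum fun x ax => eIdemB 𝒜 x * atildeB 𝒜 ax) ∈ ratSet 𝒜 (smashB 𝒜) := by
  rw [Finsupp.sum]
  exact AddSubmonoid.sum_mem (ratSub 𝒜 (smashB 𝒜)) fun x _ =>
    ex_atilde_rat 𝒜 hone hmul x (f x)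

end Aux8
/-- Let `G` be a group, `A` a `G`-graded ring, and `B` the smash product ring
with idempotents `{e_x}`.  For the rational pairing `𝒯 = (AG, B, ⟨-,-⟩)`, the
trace ideal `Rat^𝒯(B)` equals `⊕_{x∈G} e_x Ã`, and for every right `B`-module
`M` one has `Rat^𝒯(M) = M·Rat^𝒯(B) = ⊕_{x∈G} M e_x` (the sum of the `M e_x`
being direct). -/
theorem stmt15 (𝒜 : G → AddSubgroup A) [DirectSum.Decomposition 𝒜]
    (hone : (1 : A) ∈ 𝒜 1)
    (hmul : ∀ {x y : G} {a b : A}, a ∈ 𝒜 x → b ∈ 𝒜 y → a * b ∈ 𝒜 (x * y))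
    (M : Type*) [AddCommGroup M] [Module (smashB 𝒜)ᵐᵒᵖ M] :
    -- the trace ideal: `Rat^𝒯(B) = ⊕_x e_x Ã`
    (ratSet 𝒜 (smashB 𝒜) =
      {b : smashB 𝒜 | ∃ f : G →₀ A,
        b = f.sum fun x ax => eIdemB 𝒜 x * atildeB 𝒜 ax}) ∧
    -- `Rat^𝒯(M) = M·Rat^𝒯(B) = ⊕_x M e_x` for every right `B`-module `M`
    (ratSet 𝒜 M =
      {m : M | ∃ g : G →₀ M, m = g.sum fun x mx => op (eIdemB 𝒜 x) • mx}) ∧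
    -- the sum `Σ_x M e_x` is direct
    (∀ g : G →₀ M,
      (g.sum fun x mx => op (eIdemB 𝒜 x) • mx) = 0 →
      ∀ x : G, op (eIdemB 𝒜 x) • g x = 0) := by
  refine ⟨?_, ?_, fun g hz x => claim3 𝒜 M g hz x⟩
  · ext b
    constructor
    · intro hb
      exact claim1_sub 𝒜 hone hmul hb
    · rintro ⟨f, rfl⟩
      exact claim1_sup 𝒜 hone hmul f
  · ext m
    constructor
    · intro hm
      exact claim2_sub 𝒜 M hm
    · rintro ⟨g, hg⟩
      exact claim2_sup 𝒜 M g hone hmul hg
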